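/- Let W ⊂ P^n_k be a local complete intersection integral closed subscheme defined by the homogeneous prime p. Then for every e ≥ 1, the symbolic power p^(e) equals the saturation (p^e)^sat of the ordinary power. -/

import Mathlib

/-!
STATEMENT 14: Let `W ⊂ ℙⁿ_k` be a local complete intersection integral closed subscheme
defined by the homogeneous prime `p`.  Then for every `e ≥ 1` the symbolic power
`p^(e) = p^e A_p ∩ A` equals the saturation of `p^e` with respect to the homogeneous
maximal ideal `M`: `(p^e)^sat = ⋃_ν (p^e : M^ν)`.
-/

open MvPolynomial

namespace Stmt14Aux

variable {R : Type*} [CommRing R]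

lemma degree_single_one (i : Fin (n+1)) : (Finsupp.single i 1 : Fin (n+1) →₀ ℕ).degree = 1 := by
  exact Finsupp.degree_single i 1

lemma degree_add (a b : σ →₀ ℕ) : (a + b).degree = a.degree + b.degree := by
  simp [Finsupp.degree_eq_weight_one, map_add]

lemma prod_pow_mem {n : ℕ} (r : Fin n → R) (m : Fin n →₀ ℕ) :
    (∏ i, r i ^ m i) ∈ (Ideal.span (Set.range r)) ^ m.degree := by
  classical
  have key : ∀ s : Finset (Fin n),
      (∏ i ∈ s, r i ^ m i) ∈ (Ideal.span (Set.range r)) ^ (∑ i ∈ s, m i) := by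
    intro s
    induction s using Finset.induction_on with
    | empty => simp [Ideal.one_eq_top]
    | @insert a s ha ih =>
      rw [Finset.prod_insert ha, Finset.sum_insert ha, pow_add]
      exact Ideal.mul_mem_mul (Ideal.pow_mem_pow (Ideal.subset_span (Set.mem_range_self a)) _) ih
  have h1 : (∏ i, r i ^ m i) = ∏ i ∈ m.support, r i ^ m i := by
    refine (Finset.prod_subset (Finset.subset_univ _) ?_).symm
    intro i _ hi
    simp [Finsupp.notMem_support_iff.mp hi]
  rw [h1]
  exact key m.support

lemma eval_mem_mul_pow {n d : ℕ} (r : Fin n → R) (J : Ideal R) (F : MvPolynomial (Fin n) R)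
    (hF : F.IsHomogeneous d) (hc : ∀ m, coeff m F ∈ J) :
    eval r F ∈ J * (Ideal.span (Set.range r)) ^ d := by
  rw [eval_eq']
  refine Ideal.sum_mem _ fun m hm => ?_
  have hdeg : m.degree = d := by
    rw [Finsupp.degree_eq_weight_one]; exact hF (mem_support_iff.mp hm)
  exact hdeg ▸ Ideal.mul_mem_mul (hc m) (prod_pow_mem r m)

lemma eval_mem_pow {n d : ℕ} (r : Fin n → R) (F : MvPolynomial (Fin n) R)
    (hF : F.IsHomogeneous d) :
    eval r F ∈ (Ideal.span (Set.range r)) ^ d := by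
  rw [eval_eq']
  refine Ideal.sum_mem _ fun m hm => ?_
  have hdeg : m.degree = d := by
    rw [Finsupp.degree_eq_weight_one]; exact hF (mem_support_iff.mp hm)
  exact hdeg ▸ Ideal.mul_mem_left _ _ (prod_pow_mem r m)

lemma exists_repr {n : ℕ} (r : Fin n → R) :
    ∀ (d : ℕ) (x : R), x ∈ (Ideal.span (Set.range r)) ^ d →
      ∃ F : MvPolynomial (Fin n) R, F.IsHomogeneous d ∧ eval r F = x := by
  intro d
  induction d with
  | zero => exact fun x _ => ⟨C x, isHomogeneous_C _ _, eval_C _⟩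
  | succ d ih =>
    intro x hx
    rw [pow_succ] at hx
    refine Submodule.mul_induction_on hx ?_ ?_
    · intro a ha b hb
      obtain ⟨F, hF, hFa⟩ := ih a ha
      obtain ⟨c, hc⟩ := (Submodule.mem_span_range_iff_exists_fun R).mp hb
      refine ⟨F * (∑ i, C (c i) * X i), hF.mul ?_, ?_⟩
      · exact IsHomogeneous.sum _ _ _ fun i _ =>
          (zero_add 1) ▸ (isHomogeneous_C _ _).mul (isHomogeneous_X _ _)
      · simp only [map_mul, hFa, map_sum, eval_C, eval_X]
        rw [show (∑ i, c i * r i) = b by simpa [smul_eq_mul] using hc]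
    · rintro x y ⟨F, hF, rfl⟩ ⟨G, hG, rfl⟩
      exact ⟨F + G, hF.add hG, (map_add _ _ _)⟩



lemma exists_rename_succ {n : ℕ} (F : MvPolynomial (Fin (n+1)) R)
    (h : ∀ m ∈ F.support, m 0 = 0) :
    ∃ G : MvPolynomial (Fin n) R, rename Fin.succ G = F := by
  classical
  refine ⟨∑ m ∈ F.support, monomial
    (Finsupp.comapDomain Fin.succ m (Fin.succ_injective n).injOn) (coeff m F), ?_⟩
  rw [map_sum]
  conv_rhs => rw [F.as_sum]
  refine Finset.sum_congr rfl fun m hm => ?_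
  rw [rename_monomial, Finsupp.mapDomain_comapDomain _ (Fin.succ_injective n)]
  intro i hi
  have hi0 : i ≠ 0 := by
    rintro rfl
    exact (Finsupp.mem_support_iff.mp hi) (h m hm)
  rcases Fin.exists_succ_eq_of_ne_zero hi0 with ⟨j, rfl⟩
  exact Set.mem_range_self j

lemma lemD {n : ℕ} (r' : Fin n → R) (r₀ : R)
    (hQR : ∀ (d : ℕ) (F : MvPolynomial (Fin n) R), F.IsHomogeneous d →
      eval r' F ∈ (Ideal.span (Set.range r')) ^ (d+1) →
      ∀ m, coeff m F ∈ Ideal.span (Set.range r'))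
    (hr₀ : ∀ x, r₀ * x ∈ Ideal.span (Set.range r') → x ∈ Ideal.span (Set.range r')) :
    ∀ (d : ℕ) (y : R), r₀ * y ∈ (Ideal.span (Set.range r')) ^ d →
      y ∈ (Ideal.span (Set.range r')) ^ d := by
  intro d
  induction d with
  | zero => intro y _; simp [Ideal.one_eq_top]
  | succ d ih =>
    intro y hy
    have hyd : y ∈ (Ideal.span (Set.range r')) ^ d :=
      ih y (Ideal.pow_le_pow_right (Nat.le_succ d) hy)
    obtain ⟨F, hF, rfl⟩ := exists_repr r' d y hyd
    have hcoef : ∀ m, coeff m (C r₀ * F) ∈ Ideal.span (Set.range r') := by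
      refine hQR d (C r₀ * F) ?_ ?_
      · simpa using (isHomogeneous_C _ r₀).mul hF
      · simpa using hy
    have hcF : ∀ m, coeff m F ∈ Ideal.span (Set.range r') := by
      intro m
      have := hcoef m
      rw [coeff_C_mul] at this
      exact hr₀ _ this
    have := eval_mem_mul_pow r' (Ideal.span (Set.range r')) F hF hcF
    rwa [← pow_succ'] at this

set_option maxHeartbeats 1000000 in
theorem quasiReg : ∀ (n : ℕ) (r : Fin n → R),
    RingTheory.Sequence.IsWeaklyRegular R (List.ofFn r).reverse →
    ∀ (d : ℕ) (F : MvPolynomial (Fin n) R), F.IsHomogeneous d →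
      eval r F ∈ (Ideal.span (Set.range r)) ^ (d+1) →
      ∀ m, coeff m F ∈ Ideal.span (Set.range r) := by
  intro n
  induction n with
  | zero =>
    intro r _ d F hF hev m
    have hm : m = 0 := by ext i; exact i.elim0
    have hFC : F = C (coeff 0 F) := by
      ext m'
      have hm' : m' = 0 := by ext i; exact i.elim0
      subst hm'
      simp
    rw [hFC, eval_C] at hev
    rw [hm]
    exact Ideal.pow_le_self (Nat.succ_ne_zero d) hev
  | succ n IH =>
    intro r hreg
    have hofn : (List.ofFn r).reverse = (List.ofFn (Fin.tail r)).reverse ++ [r 0] := by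
      rw [List.ofFn_succ, List.reverse_cons]; rfl
    rw [hofn] at hreg
    obtain ⟨hreg', hreg0⟩ :=
      (RingTheory.Sequence.isWeaklyRegular_append_iff _ _ _).mp hreg
    have hIofList : Ideal.ofList (List.ofFn (Fin.tail r)).reverse
        = Ideal.span (Set.range (Fin.tail r)) :=
      congrArg Ideal.span (Set.ext fun x => by simp [List.mem_ofFn])
    rw [hIofList] at hreg0
    set I' : Ideal R := Ideal.span (Set.range (Fin.tail r)) with hI'def
    set I : Ideal R := Ideal.span (Set.range r) with hIdef
    have hsm : IsSMulRegular (R ⧸ (I' • ⊤ : Submodule R R)) (r 0) :=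
      (RingTheory.Sequence.isWeaklyRegular_singleton_iff _ _).mp hreg0
    have hJtop : (I' • ⊤ : Submodule R R) = I' := by rw [smul_eq_mul, Ideal.mul_top]
    have hr₀ : ∀ x, r 0 * x ∈ I' → x ∈ I' := by
      intro x hx
      have h0 : r 0 • (Submodule.Quotient.mk (p := (I' • ⊤ : Submodule R R)) x)
          = r 0 • (0 : R ⧸ (I' • ⊤ : Submodule R R)) := by
        rw [smul_zero, ← Submodule.Quotient.mk_smul, Submodule.Quotient.mk_eq_zero, hJtop]
        exact hx
      have := hsm h0
      rwa [Submodule.Quotient.mk_eq_zero, hJtop] at this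
    have hQR' := IH (Fin.tail r) hreg'
    have hIsup : I = Ideal.span {r 0} ⊔ I' := by
      rw [hIdef, hI'def, ← Fin.cons_self_tail r, Fin.range_cons, Ideal.span_insert,
        Fin.cons_self_tail]
    have hI'leI : I' ≤ I := by rw [hIsup]; exact le_sup_right
    have hr0I : r 0 ∈ I := by
      rw [hIsup]; exact Ideal.mem_sup_left (Ideal.mem_span_singleton_self _)
    have hdec : ∀ k : ℕ, I ^ (k+1) ≤ I' ^ (k+1) ⊔ Ideal.span {r 0} * I ^ k := by
      intro k
      induction k with
      | zero =>
        rw [pow_one, pow_one, pow_zero, mul_one, hIsup, sup_comm]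
      | succ k ihk =>
        have h1 : I ^ (k+2) = I * I ^ (k+1) := pow_succ' I (k+1)
        rw [h1]
        refine le_trans (Ideal.mul_mono_right ihk) ?_
        rw [Ideal.mul_sup]
        refine sup_le ?_ ?_
        · have h2 : I * I' ^ (k+1) = Ideal.span {r 0} * I' ^ (k+1) ⊔ I' * I' ^ (k+1) := by
            rw [hIsup, Ideal.sup_mul]
          rw [h2]
          refine sup_le ?_ ?_
          · exact le_sup_right.trans' (Ideal.mul_mono_right (Ideal.pow_right_mono hI'leI _))
          · exact le_sup_left.trans' (le_of_eq (pow_succ' I' (k+1)).symm)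
        · have h3 : I * (Ideal.span {r 0} * I ^ k) = Ideal.span {r 0} * I ^ (k+1) := by
            rw [mul_left_comm, ← pow_succ']
          rw [h3]
          exact le_sup_right
    intro d
    induction d with
    | zero =>
      intro F hF hev m
      by_cases h0 : coeff m F = 0
      · rw [h0]; exact zero_mem _
      have hm0 : m = 0 := by
        have hdeg : m.degree = 0 := by
          rw [Finsupp.degree_eq_weight_one]; exact hF h0
        exact (Finsupp.degree_eq_zero_iff m).mp hdeg
      have hFC : F = C (coeff 0 F) := by
        ext m'
        rw [coeff_C]
        by_cases h' : m' = 0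
        · subst h'; rw [if_pos rfl]
        · rw [if_neg (Ne.symm h')]
          by_contra hc
          exact h' ((Finsupp.degree_eq_zero_iff m').mp
            (by rw [Finsupp.degree_eq_weight_one]; exact hF hc))
      rw [hFC, eval_C, zero_add, pow_one] at hev
      rw [hm0]
      exact hev
    | succ d ihd =>
      intro F hF hev m
      set e0 : Fin (n+1) →₀ ℕ := Finsupp.single 0 1 with he0
      set H := F.divMonomial e0 with hHdef
      set F₀ := F.modMonomial e0 with hF₀def
      have hXsplit : X (0 : Fin (n+1)) * H + F₀ = F := F.divMonomial_add_modMonomial e0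
      have hHhom : H.IsHomogeneous d := by
        intro m' hm'
        rw [hHdef, coeff_divMonomial] at hm'
        have hdeg : (e0 + m').degree = d + 1 := by
          rw [Finsupp.degree_eq_weight_one]; exact hF hm'
        rw [degree_add, he0, degree_single_one] at hdeg
        rw [show (Finsupp.weight 1 : (Fin (n+1) →₀ ℕ) →+ ℕ) = Finsupp.weight (fun _ => 1) from rfl,
          ← Finsupp.degree_eq_weight_one]
        omega
      have hF₀hom : F₀.IsHomogeneous (d+1) := by
        intro m' hm'
        by_cases hle : e0 ≤ m'
        · rw [hF₀def, coeff_modMonomial_of_le _ hle] at hm'; exact absurd rfl hm'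
        · rw [hF₀def, coeff_modMonomial_of_not_le _ hle] at hm'
          exact hF hm'
      have hsupp : ∀ m' ∈ F₀.support, m' 0 = 0 := by
        intro m' hm'
        have hc := mem_support_iff.mp hm'
        by_cases hle : e0 ≤ m'
        · rw [hF₀def, coeff_modMonomial_of_le _ hle] at hc; exact absurd rfl hc
        · by_contra hne
          exact hle (by rw [he0]; exact Finsupp.single_le_iff.mpr (Nat.one_le_iff_ne_zero.mpr hne))
      obtain ⟨G, hGF₀⟩ := exists_rename_succ F₀ hsupp
      have hGhom : G.IsHomogeneous (d+1) := by
        rw [← MvPolynomial.IsHomogeneous.rename_isHomogeneous_iff (Fin.succ_injective n)]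
        rw [hGF₀]; exact hF₀hom
      have hevF₀ : eval r F₀ = eval (Fin.tail r) G := by
        rw [← hGF₀, eval_rename]; rfl
      obtain ⟨z₀, hz₀, w, hw, hzw⟩ := Submodule.mem_sup.mp (hdec (d+1) hev)
      obtain ⟨z', hz', hwz⟩ := Ideal.mem_span_singleton_mul.mp hw
      have h1 : eval r F = eval r F₀ + r 0 * eval r H := by
        rw [← hXsplit]; simp [add_comm]
      have heq : r 0 * (z' - eval r H) = eval (Fin.tail r) G - z₀ := by
        linear_combination hzw + h1 + hevF₀ + hwz
      have hz₀' : z₀ ∈ I' ^ (d+1) := Ideal.pow_le_pow_right (Nat.le_succ _) hz₀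
      have hGmem : eval (Fin.tail r) G ∈ I' ^ (d+1) := eval_mem_pow _ G hGhom
      have hD : z' - eval r H ∈ I' ^ (d+1) :=
        lemD (Fin.tail r) (r 0) hQR' hr₀ (d+1) _ (by rw [heq]; exact sub_mem hGmem hz₀')
      have hevH : eval r H ∈ I ^ (d+1) := by
        have h2 : eval r H = z' - (z' - eval r H) := by ring
        rw [h2]
        exact sub_mem hz' (Ideal.pow_right_mono hI'leI _ hD)
      have hcoeffH : ∀ m', coeff m' H ∈ I := ihd H hHhom hevH
      obtain ⟨W, hWhom, hWev⟩ := exists_repr (Fin.tail r) (d+1) _ hD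
      have houter : ∀ β, coeff β (G - C (r 0) * W) ∈ I' := by
        refine hQR' (d+1) _ (hGhom.sub (by simpa using (isHomogeneous_C _ (r 0)).mul hWhom)) ?_
        have h3 : eval (Fin.tail r) (G - C (r 0) * W) = z₀ := by
          rw [map_sub, map_mul, eval_C, hWev]
          linear_combination -heq
        rw [h3]
        exact hz₀
      have hcoeffG : ∀ β, coeff β G ∈ I := by
        intro β
        have h4 := houter β
        rw [coeff_sub, coeff_C_mul] at h4
        have h5 : coeff β G = (coeff β G - r 0 * coeff β W) + r 0 * coeff β W := by ring
        rw [h5]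
        exact add_mem (hI'leI h4) (Ideal.mul_mem_right _ _ hr0I)
      by_cases hle : e0 ≤ m
      · have h6 : coeff (m - e0) H = coeff m F := by
          rw [hHdef, coeff_divMonomial, add_tsub_cancel_of_le hle]
        rw [← h6]
        exact hcoeffH _
      · have hcm : coeff m F = coeff m F₀ := (coeff_modMonomial_of_not_le F hle).symm
        rw [hcm, ← hGF₀]
        by_cases h0 : coeff m (rename Fin.succ G) = 0
        · rw [h0]; exact zero_mem _
        · obtain ⟨β, hβ, -⟩ := coeff_rename_ne_zero _ _ _ h0
          rw [← hβ, coeff_rename_mapDomain _ (Fin.succ_injective n)]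
          exact hcoeffG β

lemma primary_of_quasiReg {n : ℕ} (r : Fin n → R)
    (hreg : RingTheory.Sequence.IsWeaklyRegular R (List.ofFn r).reverse)
    (hp : (Ideal.span (Set.range r)).IsPrime) {s : R}
    (hs : s ∉ Ideal.span (Set.range r)) :
    ∀ (e : ℕ) (x : R), s * x ∈ (Ideal.span (Set.range r)) ^ e →
      x ∈ (Ideal.span (Set.range r)) ^ e := by
  intro e
  induction e with
  | zero => intro x _; simp [Ideal.one_eq_top]
  | succ e ih =>
    intro x hx
    have hxe : x ∈ (Ideal.span (Set.range r)) ^ e :=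
      ih x (Ideal.pow_le_pow_right (Nat.le_succ e) hx)
    obtain ⟨F, hF, rfl⟩ := exists_repr r e x hxe
    have hco := quasiReg n r hreg e (C s * F)
      (by simpa using (isHomogeneous_C _ s).mul hF) (by simpa using hx)
    have hcF : ∀ m, coeff m F ∈ Ideal.span (Set.range r) := by
      intro m
      have h1 := hco m
      rw [coeff_C_mul] at h1
      exact (hp.mem_or_mem h1).resolve_left hs
    have h2 := eval_mem_mul_pow r _ F hF hcF
    rwa [← pow_succ'] at h2

lemma primary_list (bs : List R) (hreg : RingTheory.Sequence.IsWeaklyRegular R bs)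
    (hp : (Ideal.ofList bs).IsPrime) {s : R} (hs : s ∉ Ideal.ofList bs) :
    ∀ (e : ℕ) (x : R), s * x ∈ (Ideal.ofList bs) ^ e → x ∈ (Ideal.ofList bs) ^ e := by
  have h1 : Ideal.ofList bs = Ideal.span (Set.range (bs.reverse.get)) := by
    apply congrArg Ideal.span
    ext x
    constructor
    · intro hx
      obtain ⟨i, hi⟩ := List.mem_iff_get.mp (List.mem_reverse.mpr hx)
      exact ⟨i, hi⟩
    · rintro ⟨i, rfl⟩
      refine List.mem_reverse.mp ?_
      have := List.get_mem bs.reverse ⟨i.1, i.2⟩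
      simp only [Fin.eta] at this ⊢
      exact this
  have h2 : (List.ofFn bs.reverse.get).reverse = bs := by
    rw [List.ofFn_get, List.reverse_reverse]
  rw [h1] at hp hs ⊢
  exact primary_of_quasiReg _ (by rw [h2]; exact hreg) hp hs

end Stmt14Aux

open Stmt14Aux in
theorem stmt14 {k : Type*} [Field k] (n : ℕ)
    (p M : Ideal (MvPolynomial (Fin (n + 1)) k))
    (hM : M = Ideal.span (Set.range (X : Fin (n + 1) → MvPolynomial (Fin (n + 1)) k)))
    (hp : p.IsPrime)
    (hhom : ∃ S : Set (MvPolynomial (Fin (n + 1)) k),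
      (∀ f ∈ S, ∃ d, f.IsHomogeneous d) ∧ p = Ideal.span S)
    (hpM : p < M)
    -- `W` is a local complete intersection
    (hlci : ∀ (m : Ideal (MvPolynomial (Fin (n + 1)) k)) [m.IsPrime], p ≤ m → ¬ M ≤ m →
      ∃ bs : List (Localization.AtPrime m),
        RingTheory.Sequence.IsRegular (Localization.AtPrime m) bs ∧
        Ideal.map (algebraMap (MvPolynomial (Fin (n + 1)) k) (Localization.AtPrime m)) p =
          Ideal.ofList bs) :
    ∀ e : ℕ, 0 < e →
      -- `p^(e) = p^e A_p ∩ A` ...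
      (Ideal.map (algebraMap (MvPolynomial (Fin (n + 1)) k)
          (Localization.AtPrime (hp := hp) p)) (p ^ e)).comap
        (algebraMap (MvPolynomial (Fin (n + 1)) k) (Localization.AtPrime (hp := hp) p))
      -- ... equals the saturation `(p^e)^sat`
        = ⨆ ν : ℕ, (p ^ e).colon ((M ^ ν : Ideal (MvPolynomial (Fin (n + 1)) k)) : Set (MvPolynomial (Fin (n + 1)) k)) := by
  haveI := hp
  intro e _he
  set A := MvPolynomial (Fin (n + 1)) k with hA
  apply le_antisymm
  · -- symbolic power ⊆ saturation
    intro x hx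
    rw [Ideal.mem_comap] at hx
    obtain ⟨⟨a, s⟩, hax⟩ := (IsLocalization.mem_map_algebraMap_iff p.primeCompl _).mp hx
    have hinj : Function.Injective (algebraMap A (Localization.AtPrime p)) :=
      IsLocalization.injective (M := p.primeCompl) _ (fun y hy =>
        mem_nonZeroDivisors_of_ne_zero (fun h0 => (hy : y ∉ p) (h0 ▸ p.zero_mem)))
    have hsx : s.1 * x ∈ p ^ e := by
      have h1 : x * s.1 = a.1 := hinj (by rw [map_mul]; exact hax)
      rw [mul_comm]
      rw [h1]
      exact a.2
    set J := (p ^ e).colon (Ideal.span {x}) with hJ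
    have hMrad : M ≤ J.radical := by
      rw [Ideal.radical_eq_sInf]
      refine le_sInf ?_
      rintro m ⟨hJm, hmprime⟩
      by_contra hMm
      haveI := hmprime
      have hpeJ : p ^ e ≤ J := fun y hy =>
        Ideal.mem_colon_span_singleton.mpr (Ideal.mul_mem_right x _ hy)
      have hpm : p ≤ m := hmprime.le_of_pow_le (le_trans hpeJ hJm)
      obtain ⟨bs, hbsreg, hbsmap⟩ := hlci m hpm hMm
      have hdisj : Disjoint (m.primeCompl : Set A) (p : Set A) := by
        rw [Set.disjoint_left]
        intro y hy hyp
        exact hy (hpm hyp)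
      have hqprime : (Ideal.map (algebraMap A (Localization.AtPrime m)) p).IsPrime :=
        IsLocalization.isPrime_of_isPrime_disjoint m.primeCompl _ p hp hdisj
      have hcomap : Ideal.comap (algebraMap A (Localization.AtPrime m))
          (Ideal.map (algebraMap A (Localization.AtPrime m)) p) = p :=
        IsLocalization.under_map_of_isPrime_disjoint m.primeCompl _ (I := p) hp hdisj
      have hsq : algebraMap A (Localization.AtPrime m) s.1 ∉ Ideal.ofList bs := by
        rw [← hbsmap]
        intro hmem
        have h2 : s.1 ∈ Ideal.comap (algebraMap A (Localization.AtPrime m))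
            (Ideal.map (algebraMap A (Localization.AtPrime m)) p) :=
          Ideal.mem_comap.mpr hmem
        rw [hcomap] at h2
        exact s.2 h2
      have hxq : algebraMap A (Localization.AtPrime m) x ∈ (Ideal.ofList bs) ^ e := by
        refine primary_list bs hbsreg.toIsWeaklyRegular (hbsmap ▸ hqprime) hsq e _ ?_
        have hmem : algebraMap A (Localization.AtPrime m) (s.1 * x) ∈
            Ideal.map (algebraMap A (Localization.AtPrime m)) (p ^ e) :=
          Ideal.mem_map_of_mem _ hsx
        rw [Ideal.map_pow, hbsmap, map_mul] at hmem
        exact hmem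
      rw [← hbsmap, ← Ideal.map_pow] at hxq
      obtain ⟨⟨b, t⟩, hbt⟩ := (IsLocalization.mem_map_algebraMap_iff m.primeCompl _).mp hxq
      have hinjm : Function.Injective (algebraMap A (Localization.AtPrime m)) :=
        IsLocalization.injective (M := m.primeCompl) _ (fun y hy =>
          mem_nonZeroDivisors_of_ne_zero (fun h0 => (hy : y ∉ m) (h0 ▸ m.zero_mem)))
      have hxt : x * t.1 = b.1 := hinjm (by rw [map_mul]; exact hbt)
      have htJ : t.1 ∈ J := by
        refine Ideal.mem_colon_span_singleton.mpr ?_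
        rw [mul_comm, hxt]
        exact b.2
      exact t.2 (hJm htJ)
    have hfg : M.FG := IsNoetherian.noetherian M
    obtain ⟨ν, hν⟩ := Ideal.exists_pow_le_of_le_radical_of_fg hMrad hfg
    refine (le_iSup (fun ν : ℕ => (p ^ e).colon ((M ^ ν : Ideal A) : Set A)) ν) ?_
    refine Submodule.mem_colon.mpr fun y hy => ?_
    rw [smul_eq_mul, mul_comm]
    exact Ideal.mem_colon_span_singleton.mp (hν hy)
  · -- saturation ⊆ symbolic power
    refine iSup_le fun ν => ?_
    intro x hx
    obtain ⟨t, htM, htp⟩ := SetLike.exists_of_lt hpM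
    have htx : x * t ^ ν ∈ p ^ e := by
      have h1 : t ^ ν ∈ M ^ ν := Ideal.pow_mem_pow htM ν
      have h2 := Submodule.mem_colon.mp hx _ h1
      rwa [smul_eq_mul] at h2
    rw [Ideal.mem_comap]
    have htcompl : t ^ ν ∈ p.primeCompl := fun h => htp (hp.mem_of_pow_mem ν h)
    have hunit : IsUnit (algebraMap A (Localization.AtPrime p) (t ^ ν)) :=
      IsLocalization.map_units _ (⟨t ^ ν, htcompl⟩ : p.primeCompl)
    have hmem : algebraMap A (Localization.AtPrime p) (x * t ^ ν) ∈
        Ideal.map (algebraMap A (Localization.AtPrime p)) (p ^ e) :=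
      Ideal.mem_map_of_mem _ htx
    rw [map_mul] at hmem
    obtain ⟨u, hu⟩ := hunit
    rw [← hu] at hmem
    have := Ideal.mul_mem_right (↑u⁻¹) _ hmem
    rwa [mul_assoc, Units.mul_inv, mul_one] at this
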